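/- For all natural numbers M, N, j, k with 1 ≤ N and j ≤ k ≤ N, one has k^j ≤ B^j · N^((k−M)⁺), where B = max(M, 3) and (k−M)⁺ denotes truncated subtraction max(k−M, 0). -/
import Mathlib

private lemma succ_pow_le_three_mul (n e : ℕ) (he : e ≤ n) :
    (n + 1) ^ e ≤ 3 * n ^ e := by
  rcases Nat.eq_zero_or_pos n with rfl | hn
  · interval_cases e; simp
  · have hn' : (0:ℝ) < n := by exact_mod_cast hn
    have key : ((n:ℝ) + 1) ^ e ≤ 3 * (n:ℝ) ^ e := by
      have h1 : (n:ℝ) + 1 ≤ n * Real.exp (1 / n) := by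
        have := Real.add_one_le_exp (1 / (n:ℝ))
        calc (n:ℝ) + 1 = n * (1 / n + 1) := by field_simp; ring
          _ ≤ n * Real.exp (1 / n) := by
              exact mul_le_mul_of_nonneg_left this (le_of_lt hn')
      calc ((n:ℝ) + 1) ^ e ≤ ((n:ℝ) * Real.exp (1 / n)) ^ e := by
            apply pow_le_pow_left₀ (by positivity) h1
        _ = (n:ℝ) ^ e * Real.exp (e / n) := by
            rw [mul_pow, ← Real.exp_nat_mul]; ring_nf
        _ ≤ (n:ℝ) ^ e * Real.exp 1 := by
            apply mul_le_mul_of_nonneg_left _ (by positivity)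
            apply Real.exp_le_exp.mpr
            rw [div_le_one hn']
            exact_mod_cast he
        _ ≤ (n:ℝ) ^ e * 3 := by
            apply mul_le_mul_of_nonneg_left _ (by positivity)
            linarith [Real.exp_one_lt_d9]
        _ = 3 * (n:ℝ) ^ e := by ring
    exact_mod_cast key

private lemma add_pow_le_aux (M d e : ℕ) (he : e ≤ M) :
    (M + d) ^ e ≤ (max M 3) ^ e * 3 ^ d := by
  induction d with
  | zero => simpa using Nat.pow_le_pow_left (le_max_left M 3) e
  | succ d ih =>
      calc (M + (d + 1)) ^ e = ((M + d) + 1) ^ e := by ring_nf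
        _ ≤ 3 * (M + d) ^ e :=
            succ_pow_le_three_mul _ _ (le_trans he (Nat.le_add_right M d))
        _ ≤ 3 * ((max M 3) ^ e * 3 ^ d) := Nat.mul_le_mul_left 3 ih
        _ = (max M 3) ^ e * 3 ^ (d + 1) := by ring

/-- For all natural numbers `M, N, j, k` with `1 ≤ N` and `j ≤ k ≤ N`, one has
`k^j ≤ B^j * N^((k−M)⁺)` where `B = max M 3` and `(k−M)⁺` is truncated subtraction. -/
theorem pow_le_max_pow_mul_pow_truncSub (M N j k : ℕ) (hN : 1 ≤ N)
    (hjk : j ≤ k) (hkN : k ≤ N) :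
    k ^ j ≤ (max M 3) ^ j * N ^ (k - M) := by
  set B := max M 3 with hB
  have hB1 : 1 ≤ B := le_trans (by norm_num) (le_max_right M 3)
  rcases le_or_gt k M with hkM | hMk
  · rw [Nat.sub_eq_zero_of_le hkM, pow_zero, mul_one]
    exact Nat.pow_le_pow_left (le_trans hkM (le_max_left M 3)) j
  · set d := k - M with hd
    have hkd : k = M + d := by omega
    rcases le_or_gt j d with hjd | hdj
    · calc k ^ j ≤ N ^ j := Nat.pow_le_pow_left hkN j
        _ ≤ N ^ d := Nat.pow_le_pow_right hN hjd
        _ ≤ B ^ j * N ^ d := Nat.le_mul_of_pos_left _ (Nat.one_le_pow _ _ hB1)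
    · set e := j - d with he
      have hje : j = e + d := by omega
      have heM : e ≤ M := by omega
      calc k ^ j = k ^ e * k ^ d := by rw [hje, pow_add]
        _ ≤ (B ^ e * 3 ^ d) * N ^ d := by
            apply Nat.mul_le_mul
            · rw [hkd]; exact add_pow_le_aux M d e heM
            · exact Nat.pow_le_pow_left hkN d
        _ ≤ (B ^ e * B ^ d) * N ^ d := by
            apply Nat.mul_le_mul_right
            exact Nat.mul_le_mul_left _ (Nat.pow_le_pow_left (le_max_right M 3) d)
        _ = B ^ j * N ^ d := by rw [hje, pow_add]
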